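/- Let G be a finite simple graph and fix a vertex v of G. Let G^v be the graph obtained from G by adding one new vertex v' adjacent only to v, and let G − v denote the induced subgraph of G on V(G) ∖ {v}. Then: (1) P_{G^v}(x) = P_G(x) + x · P_{G−v}(x); (2) α(G^v) = max( α(G), 1 + α(G−v) ); and (3) setting a = M(G) and b = M(G−v), if a ≠ b then M(G^v) = min(a, b), while if a = b then M(G^v) ≥ a. -/
import Mathlib


attribute [local instance] Classical.propDecidable

/-- `s` is an independent set of vertices of `G`. -/
def IsIndep {V : Type*} (G : SimpleGraph V) (s : Finset V) : Prop :=
  ∀ v ∈ s, ∀ w ∈ s, ¬ G.Adj v w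

/-- The independence polynomial `P_G(x) = ∑ g_i x^i`. -/
noncomputable def indepPoly {V : Type*} [Fintype V] (G : SimpleGraph V) : Polynomial ℤ :=
  ∑ s ∈ Finset.univ.filter (fun s : Finset V => IsIndep G s), Polynomial.X ^ s.card

/-- The independence number `α(G)`. -/
noncomputable def indepNum {V : Type*} [Fintype V] (G : SimpleGraph V) : ℕ :=
  (Finset.univ.filter (fun s : Finset V => IsIndep G s)).sup Finset.card

/-- `M(G)`: the multiplicity of `x = -1` as a root of `P_G(x)`. -/
noncomputable def multM {V : Type*} [Fintype V] (G : SimpleGraph V) : ℕ :=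
  (indepPoly G).rootMultiplicity (-1)

/-- The defining relation of the one-vertex whiskering `G^v`: the edges of `G` together
with one pendant edge `{v, v'}`, where `v'` is the new vertex. -/
def W1Rel {V : Type*} (G : SimpleGraph V) (v : V) : (V ⊕ Unit) → (V ⊕ Unit) → Prop
  | Sum.inl a, Sum.inl b => G.Adj a b
  | Sum.inl a, Sum.inr _ => a = v
  | _, _ => False

/-- `G^v`: the graph obtained from `G` by whiskering the vertex `v`. -/
noncomputable def whiskerOne {V : Type*} (G : SimpleGraph V) (v : V) :
    SimpleGraph (V ⊕ Unit) :=
  SimpleGraph.fromRel (W1Rel G v)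

namespace WhiskerAux

open Polynomial Finset

variable {V : Type*} (G : SimpleGraph V) (v : V)

def emb1 : V ↪ (V ⊕ Unit) := ⟨Sum.inl, Sum.inl_injective⟩

def emb2 (v : V) : ({v}ᶜ : Set V) ↪ (V ⊕ Unit) :=
  ⟨fun w => Sum.inl w.1, fun a b h => Subtype.ext (Sum.inl_injective h)⟩

lemma adj_ll {a b : V} : (whiskerOne G v).Adj (Sum.inl a) (Sum.inl b) ↔ G.Adj a b := by
  simp only [whiskerOne, SimpleGraph.fromRel_adj, W1Rel]
  constructor
  · rintro ⟨-, h | h⟩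
    exacts [h, h.symm]
  · intro h
    exact ⟨Sum.inl_injective.ne h.ne, Or.inl h⟩

lemma adj_lr {a : V} : (whiskerOne G v).Adj (Sum.inl a) (Sum.inr ()) ↔ a = v := by
  simp only [whiskerOne, SimpleGraph.fromRel_adj, W1Rel]
  constructor
  · rintro ⟨-, h | h⟩
    exacts [h, h.elim]
  · intro h
    exact ⟨by simp, Or.inl h⟩

lemma indep_map1 {s : Finset V} :
    IsIndep (whiskerOne G v) (s.map (emb1 (V := V))) ↔ IsIndep G s := by
  constructor
  · intro h a ha b hb hab
    exact h _ (mem_map_of_mem _ ha) _ (mem_map_of_mem _ hb) ((adj_ll G v).2 hab)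
  · intro h x hx y hy hxy
    obtain ⟨a, ha, rfl⟩ := mem_map.1 hx
    obtain ⟨b, hb, rfl⟩ := mem_map.1 hy
    exact h a ha b hb ((adj_ll G v).1 hxy)

lemma indep_insert {t : Finset ({v}ᶜ : Set V)} :
    IsIndep (whiskerOne G v) (insert (Sum.inr ()) (t.map (emb2 v))) ↔
      IsIndep (G.induce ({v}ᶜ : Set V)) t := by
  constructor
  · intro h a ha b hb hab
    exact h _ (mem_insert_of_mem (mem_map_of_mem _ ha)) _
      (mem_insert_of_mem (mem_map_of_mem _ hb)) ((adj_ll G v).2 hab)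
  · intro h x hx y hy hxy
    rcases mem_insert.1 hx with rfl | hx'
    · rcases mem_insert.1 hy with rfl | hy'
      · exact (whiskerOne G v).irrefl hxy
      · obtain ⟨b, hb, rfl⟩ := mem_map.1 hy'
        exact b.2 ((adj_lr G v).1 hxy.symm)
    · obtain ⟨a, ha, rfl⟩ := mem_map.1 hx'
      rcases mem_insert.1 hy with rfl | hy'
      · exact a.2 ((adj_lr G v).1 hxy)
      · obtain ⟨b, hb, rfl⟩ := mem_map.1 hy'
        exact h a ha b hb ((adj_ll G v).1 hxy)

lemma u_notMem_map1 (s : Finset V) : Sum.inr () ∉ s.map (emb1 (V := V)) := by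
  simp [emb1]

lemma u_notMem_map2 (t : Finset ({v}ᶜ : Set V)) : Sum.inr () ∉ t.map (emb2 v) := by
  simp [emb2]

variable [Fintype V]

noncomputable def back1 (s : Finset (V ⊕ Unit)) : Finset V :=
  univ.filter (fun a => Sum.inl a ∈ s)

noncomputable def back2 (v : V) (s : Finset (V ⊕ Unit)) : Finset ({v}ᶜ : Set V) :=
  univ.filter (fun w => Sum.inl w.1 ∈ s)

lemma back1_map {s : Finset (V ⊕ Unit)} (hu : Sum.inr () ∉ s) :
    (back1 s).map (emb1 (V := V)) = s := by
  ext x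
  cases x with
  | inl a => simp [back1, emb1]
  | inr t => cases t; simp [back1, emb1, hu]

lemma back1_of_map (s : Finset V) : back1 (s.map (emb1 (V := V))) = s := by
  ext a; simp [back1, emb1]

lemma back2_insert {s : Finset (V ⊕ Unit)} (hind : IsIndep (whiskerOne G v) s)
    (hu : Sum.inr () ∈ s) :
    insert (Sum.inr ()) ((back2 v s).map (emb2 v)) = s := by
  have hv : Sum.inl v ∉ s := fun hv => hind _ hv _ hu ((adj_lr G v).2 rfl)
  ext x
  cases x with
  | inl a =>
    constructor
    · intro hx
      rcases mem_insert.1 hx with h | h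
      · exact absurd h (by simp)
      · obtain ⟨w, hw, hwe⟩ := mem_map.1 h
        show Sum.inl a ∈ s
        rw [← hwe]
        exact (mem_filter.1 hw).2
    · intro h
      have hne : a ≠ v := by rintro rfl; exact hv h
      exact mem_insert_of_mem (mem_map.2 ⟨⟨a, by simp [hne]⟩, mem_filter.2 ⟨mem_univ _, h⟩, rfl⟩)
  | inr t => cases t; simp [hu]

lemma back2_of_insert (t : Finset ({v}ᶜ : Set V)) :
    back2 v (insert (Sum.inr ()) (t.map (emb2 v))) = t := by
  ext w
  simp only [back2, emb2, mem_filter, mem_univ, true_and, mem_insert, mem_map,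
    Function.Embedding.coeFn_mk]
  constructor
  · rintro (h | ⟨a, ha, hae⟩)
    · exact absurd h (by simp)
    · rwa [Subtype.ext (Sum.inl_injective hae)] at ha
  · intro h
    exact Or.inr ⟨w, h, rfl⟩

lemma back1_indep {s : Finset (V ⊕ Unit)} (hind : IsIndep (whiskerOne G v) s)
    (hu : Sum.inr () ∉ s) : IsIndep G (back1 s) := by
  rw [← indep_map1 G v, back1_map hu]
  exact hind

lemma back2_indep {s : Finset (V ⊕ Unit)} (hind : IsIndep (whiskerOne G v) s)
    (hu : Sum.inr () ∈ s) : IsIndep (G.induce ({v}ᶜ : Set V)) (back2 v s) := by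
  rw [← indep_insert G v, back2_insert G v hind hu]
  exact hind

lemma back1_card {s : Finset (V ⊕ Unit)} (hu : Sum.inr () ∉ s) :
    (back1 s).card = s.card := by
  conv_rhs => rw [← back1_map hu]
  rw [card_map]

lemma back2_card {s : Finset (V ⊕ Unit)} (hind : IsIndep (whiskerOne G v) s)
    (hu : Sum.inr () ∈ s) : (back2 v s).card + 1 = s.card := by
  conv_rhs => rw [← back2_insert G v hind hu]
  rw [card_insert_of_notMem (u_notMem_map2 v _), card_map]

lemma poly_eq : indepPoly (whiskerOne G v)
    = indepPoly G + X * indepPoly (G.induce ({v}ᶜ : Set V)) := by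
  unfold indepPoly
  rw [← Finset.sum_filter_add_sum_filter_not
    (univ.filter fun s : Finset (V ⊕ Unit) => IsIndep (whiskerOne G v) s)
    (fun s => Sum.inr () ∉ s)]
  congr 1
  · refine Finset.sum_bij' (fun s _ => back1 s) (fun s _ => s.map (emb1 (V := V)))
      ?_ ?_ ?_ ?_ ?_
    · intro s hs
      simp only [mem_filter, mem_univ, true_and] at hs ⊢
      exact back1_indep G v hs.1 hs.2
    · intro s hs
      simp only [mem_filter, mem_univ, true_and] at hs ⊢
      exact ⟨(indep_map1 G v).2 hs, u_notMem_map1 s⟩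
    · intro s hs
      simp only [mem_filter, mem_univ, true_and] at hs
      exact back1_map hs.2
    · intro s hs
      exact back1_of_map s
    · intro s hs
      simp only [mem_filter, mem_univ, true_and] at hs
      rw [back1_card hs.2]
  · rw [Finset.mul_sum]
    have hpow : ∀ t : Finset ({v}ᶜ : Set V), X * X ^ t.card = (X : Polynomial ℤ) ^ (t.card + 1) :=
      fun t => (pow_succ' X t.card).symm
    rw [Finset.sum_congr rfl (fun t _ => hpow t)]
    refine Finset.sum_bij' (fun s _ => back2 v s)
      (fun t _ => insert (Sum.inr ()) (t.map (emb2 v))) ?_ ?_ ?_ ?_ ?_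
    · intro s hs
      simp only [mem_filter, mem_univ, true_and, not_not] at hs ⊢
      exact back2_indep G v hs.1 hs.2
    · intro t ht
      simp only [mem_filter, mem_univ, true_and, not_not] at ht ⊢
      exact ⟨(indep_insert G v).2 ht, mem_insert_self _ _⟩
    · intro s hs
      simp only [mem_filter, mem_univ, true_and, not_not] at hs
      exact back2_insert G v hs.1 hs.2
    · intro t ht
      exact back2_of_insert v t
    · intro s hs
      simp only [mem_filter, mem_univ, true_and, not_not] at hs
      rw [back2_card G v hs.1 hs.2]

lemma num_eq : indepNum (whiskerOne G v)
    = max (indepNum G) (1 + indepNum (G.induce ({v}ᶜ : Set V))) := by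
  apply le_antisymm
  · apply Finset.sup_le
    intro s hs
    have hind : IsIndep (whiskerOne G v) s := (mem_filter.1 hs).2
    by_cases hu : Sum.inr () ∈ s
    · refine le_max_of_le_right ?_
      rw [← back2_card G v hind hu]
      have h2 : (back2 v s).card ≤ indepNum (G.induce ({v}ᶜ : Set V)) :=
        Finset.le_sup (f := Finset.card)
          (mem_filter.2 ⟨mem_univ _, back2_indep G v hind hu⟩)
      omega
    · refine le_max_of_le_left ?_
      rw [← back1_card hu]
      exact Finset.le_sup (f := Finset.card)
        (mem_filter.2 ⟨mem_univ _, back1_indep G v hind hu⟩)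
  · apply max_le
    · apply Finset.sup_le
      intro s hs
      have : (s.map (emb1 (V := V))).card ≤ indepNum (whiskerOne G v) :=
        Finset.le_sup (f := Finset.card)
          (mem_filter.2 ⟨mem_univ _, (indep_map1 G v).2 (mem_filter.1 hs).2⟩)
      rwa [card_map] at this
    · have hne : (univ.filter fun t : Finset ({v}ᶜ : Set V) =>
          IsIndep (G.induce ({v}ᶜ : Set V)) t).Nonempty :=
        ⟨∅, mem_filter.2 ⟨mem_univ _, fun a ha => absurd ha (notMem_empty _)⟩⟩
      obtain ⟨t, ht, hsup⟩ := Finset.exists_mem_eq_sup _ hne Finset.card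
      unfold indepNum
      rw [hsup]
      have : (insert (Sum.inr ()) (t.map (emb2 v))).card ≤ indepNum (whiskerOne G v) :=
        Finset.le_sup (f := Finset.card)
          (mem_filter.2 ⟨mem_univ _, (indep_insert G v).2 (mem_filter.1 ht).2⟩)
      rw [card_insert_of_notMem (u_notMem_map2 v _), card_map] at this
      unfold indepNum at this
      omega

lemma coeff_zero_eq (G : SimpleGraph V) : (indepPoly G).coeff 0 = 1 := by
  unfold indepPoly
  rw [Polynomial.finset_sum_coeff, Finset.sum_eq_single (∅ : Finset V)]
  · simp
  · intro s hs hne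
    rw [Polynomial.coeff_X_pow]
    have : s.card ≠ 0 := fun h => hne (Finset.card_eq_zero.1 h)
    simp [Ne.symm this]
  · intro h
    exact absurd (mem_filter.2 ⟨mem_univ _, fun a ha => absurd ha (notMem_empty _)⟩) h

lemma poly_ne_zero (G : SimpleGraph V) : indepPoly G ≠ 0 := by
  intro h
  have := coeff_zero_eq (V := V) G
  rw [h] at this
  simp at this

lemma rm_neg {q : Polynomial ℤ} (hq : q ≠ 0) (a : ℤ) :
    rootMultiplicity a (-q) = rootMultiplicity a q := by
  apply le_antisymm
  · rw [Polynomial.le_rootMultiplicity_iff hq]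
    exact (dvd_neg).1 (Polynomial.pow_rootMultiplicity_dvd (-q) a)
  · rw [Polynomial.le_rootMultiplicity_iff (neg_ne_zero.2 hq)]
    exact (dvd_neg).2 (Polynomial.pow_rootMultiplicity_dvd q a)

lemma rm_add_lt {p q : Polynomial ℤ} (hp : p ≠ 0) (hq : q ≠ 0) (hs : p + q ≠ 0) (a : ℤ)
    (h : rootMultiplicity a p < rootMultiplicity a q) :
    rootMultiplicity a (p + q) = rootMultiplicity a p := by
  apply le_antisymm
  · by_contra hc
    push_neg at hc
    have e : (p + q) + (-q) = p := by ring
    have h2 := Polynomial.rootMultiplicity_add (p := p + q) (q := -q) a (by rw [e]; exact hp)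
    rw [e, rm_neg hq] at h2
    exact absurd h2 (not_le.2 (lt_min hc h))
  · have h2 := Polynomial.rootMultiplicity_add (p := p) (q := q) a hs
    rwa [min_eq_left h.le] at h2

end WhiskerAux

/-- For the one-vertex whiskering `G^v`:
(1) `P_{G^v}(x) = P_G(x) + x P_{G-v}(x)`;
(2) `α(G^v) = max(α(G), 1 + α(G-v))`;
(3) with `a = M(G)` and `b = M(G-v)`: if `a ≠ b` then `M(G^v) = min(a,b)`, and if
`a = b` then `M(G^v) ≥ a`. -/
theorem whiskerOne_invariants {V : Type*} [Fintype V] (G : SimpleGraph V) (v : V) :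
    indepPoly (whiskerOne G v)
        = indepPoly G + Polynomial.X * indepPoly (G.induce ({v}ᶜ : Set V))
      ∧ indepNum (whiskerOne G v)
          = max (indepNum G) (1 + indepNum (G.induce ({v}ᶜ : Set V)))
      ∧ (multM G ≠ multM (G.induce ({v}ᶜ : Set V)) →
          multM (whiskerOne G v) = min (multM G) (multM (G.induce ({v}ᶜ : Set V))))
      ∧ (multM G = multM (G.induce ({v}ᶜ : Set V)) →
          multM G ≤ multM (whiskerOne G v)) := by
  classical
  obtain ⟨h1, h2⟩ : indepPoly (whiskerOne G v)
        = indepPoly G + Polynomial.X * indepPoly (G.induce ({v}ᶜ : Set V))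
      ∧ indepNum (whiskerOne G v)
        = max (indepNum G) (1 + indepNum (G.induce ({v}ᶜ : Set V))) :=
    ⟨WhiskerAux.poly_eq G v, WhiskerAux.num_eq G v⟩
  have main : (multM G ≠ multM (G.induce ({v}ᶜ : Set V)) →
        multM (whiskerOne G v) = min (multM G) (multM (G.induce ({v}ᶜ : Set V))))
      ∧ (multM G = multM (G.induce ({v}ᶜ : Set V)) →
        multM G ≤ multM (whiskerOne G v)) := by
    set P := indepPoly G with hP
    set Q := indepPoly (G.induce ({v}ᶜ : Set V)) with hQ
    have hP0 : P ≠ 0 := WhiskerAux.poly_ne_zero G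
    have hQ0 : Q ≠ 0 := WhiskerAux.poly_ne_zero _
    have hX0 : (Polynomial.X : Polynomial ℤ) ≠ 0 := Polynomial.X_ne_zero
    have hXQ0 : Polynomial.X * Q ≠ 0 := mul_ne_zero hX0 hQ0
    have hsum0 : P + Polynomial.X * Q ≠ 0 := by
      intro h
      have hc : (P + Polynomial.X * Q).coeff 0 = 1 := by
        rw [Polynomial.coeff_add, Polynomial.mul_coeff_zero, Polynomial.coeff_X_zero,
          zero_mul, add_zero, hP, WhiskerAux.coeff_zero_eq]
      rw [h] at hc
      simp at hc
    have hrmXQ : (Polynomial.X * Q).rootMultiplicity (-1) = Q.rootMultiplicity (-1) := by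
      rw [Polynomial.rootMultiplicity_mul hXQ0,
        Polynomial.rootMultiplicity_eq_zero (by simp [Polynomial.IsRoot]), zero_add]
    have hW : multM (whiskerOne G v) = (P + Polynomial.X * Q).rootMultiplicity (-1) := by
      rw [multM, h1]
    have hga : multM G = Polynomial.rootMultiplicity (-1) P := rfl
    have hgb : multM (G.induce ({v}ᶜ : Set V)) = Polynomial.rootMultiplicity (-1) Q := rfl
    constructor
    · intro hab
      rw [hW]
      rw [hga, hgb] at hab ⊢
      rcases lt_or_gt_of_ne hab with hlt | hgt
      · rw [min_eq_left hlt.le]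
        exact WhiskerAux.rm_add_lt hP0 hXQ0 hsum0 (-1)
          (by rw [hrmXQ]; exact hlt)
      · rw [min_eq_right hgt.le]
        have e : P + Polynomial.X * Q = Polynomial.X * Q + P := by ring
        rw [e, WhiskerAux.rm_add_lt hXQ0 hP0 (by rw [← e]; exact hsum0) (-1)
          (by rw [hrmXQ]; exact hgt), hrmXQ]
    · intro hab
      rw [hW]
      have h3 := Polynomial.rootMultiplicity_add (p := P) (q := Polynomial.X * Q)
        (-1) hsum0
      rw [hga, hgb] at hab
      rw [hrmXQ, ← hab, min_self] at h3
      rw [hga]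
      exact h3
  exact ⟨h1, h2, main.1, main.2⟩
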